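/- Let f, g be Boolean functions over a finite variable set V. If f is balanced, g is balanced, and f is statistically independent of g, then for any Boolean function h, the function f ⊕ h is statistically independent of g if and only if h is statistically independent of f ⊕ g. -/

import Mathlib

namespace Danira

instance : Std.Commutative xor := ⟨Bool.xor_comm⟩
instance : Std.Associative xor := ⟨Bool.xor_assoc⟩
instance : Std.Commutative or := ⟨Bool.or_comm⟩
instance : Std.Associative or := ⟨Bool.or_assoc⟩

variable {V : Type*} [Fintype V] [DecidableEq V]

/-- Number of satisfying assignments of a Boolean function. -/
def weight (f : (V → Bool) → Bool) : ℕ :=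
  (Finset.univ.filter fun α : V → Bool => f α = true).card

/-- A Boolean function is balanced if exactly half of all assignments satisfy it. -/
def Balanced (f : (V → Bool) → Bool) : Prop :=
  weight f = 2 ^ (Fintype.card V - 1)

/-- Statistical independence of two Boolean functions. -/
def StatIndep (f g : (V → Bool) → Bool) : Prop :=
  weight (fun α => f α && g α) * weight (fun α => !f α)
    = weight (fun α => !f α && g α) * weight f

/-- `f` functionally depends on variable `x`. -/
def FunDep (f : (V → Bool) → Bool) (x : V) : Prop :=
  ∃ α β : V → Bool, (∀ v, v ≠ x → α v = β v) ∧ f α ≠ f β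

instance (f : (V → Bool) → Bool) (x : V) : Decidable (FunDep f x) := by
  unfold FunDep; infer_instance

/-- Partial evaluation `f[b/x]`. -/
def subst (f : (V → Bool) → Bool) (x : V) (b : Bool) : (V → Bool) → Bool :=
  fun α => f (Function.update α x b)

/-- Variables that can be linearly factored out of `f`. -/
def Fact (f : (V → Bool) → Bool) : Finset V :=
  Finset.univ.filter fun x => ∀ α, xor (subst f x false α) (subst f x true α) = true

/-- Essential variables of `f`. -/
def Ess (f : (V → Bool) → Bool) : Finset V :=
  Finset.univ.filter fun x => FunDep f x


lemma weight_decomp (f g h : (V → Bool) → Bool) (p : Bool × Bool × Bool → Bool) :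
    weight (fun α => p (f α, g α, h α)) =
      ∑ t : Bool × Bool × Bool,
        (if p t = true then
          (Finset.univ.filter fun α : V → Bool => (f α, g α, h α) = t).card else 0) := by
  classical
  rw [weight, ← Finset.sum_filter]
  rw [Finset.card_eq_sum_card_fiberwise
      (f := fun α : V → Bool => (f α, g α, h α))
      (t := Finset.univ.filter fun t => p t = true)
      (fun x hx => Finset.mem_filter.mpr ⟨Finset.mem_univ _, (Finset.mem_filter.mp hx).2⟩)]
  refine Finset.sum_congr rfl fun t ht => ?_
  have hpt : p t = true := (Finset.mem_filter.mp ht).2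
  congr 1
  ext α
  simp only [Finset.mem_filter, Finset.mem_univ, true_and]
  constructor
  · exact fun h2 => h2.2
  · intro h2; exact ⟨by rw [h2]; exact hpt, h2⟩


lemma statIndep_aux (a b W W' P : ℕ) (hP : 0 < P) (hab : a + b = P) (hW : W + W' = 2 * P) :
    a * W' = b * W ↔ 2 * a = W := by
  constructor
  · intro hh
    have h2 : a * (W + W') = (a + b) * W := by rw [Nat.mul_add, Nat.add_mul, hh]
    rw [hW, hab] at h2
    have h3 : P * (2 * a) = P * W := by rw [show P * (2 * a) = a * (2 * P) by ring]; exact h2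
    exact Nat.eq_of_mul_eq_mul_left hP h3
  · intro hh
    have hW' : W' = 2 * b := by omega
    rw [hW', ← hh]; ring

theorem stmt11 (f g h : (V → Bool) → Bool)
    (hf : Balanced f) (hg : Balanced g) (hfg : StatIndep f g) :
    StatIndep (fun α => xor (f α) (h α)) g
      ↔ StatIndep h (fun α => xor (f α) (g α)) := by
  classical
  set M : Bool × Bool × Bool → ℕ :=
    fun t => (Finset.univ.filter fun α : V → Bool => (f α, g α, h α) = t).card with hM
  have key : ∀ p : Bool × Bool × Bool → Bool,
      weight (fun α => p (f α, g α, h α)) = ∑ t : Bool × Bool × Bool, if p t = true then M t else 0 :=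
    fun p => weight_decomp f g h p
  have e1 := key (fun t => t.1)
  have e2 := key (fun t => t.2.1)
  have e3 : weight (fun α => f α && g α) = _ := key (fun t => t.1 && t.2.1)
  have e4 : weight (fun α => !f α) = _ := key (fun t => !t.1)
  have e5 : weight (fun α => !f α && g α) = _ := key (fun t => !t.1 && t.2.1)
  have e6 : weight (fun α => xor (f α) (h α) && g α) = _ := key (fun t => xor t.1 t.2.2 && t.2.1)
  have e7 : weight (fun α => !(xor (f α) (h α))) = _ := key (fun t => !(xor t.1 t.2.2))
  have e8 : weight (fun α => !(xor (f α) (h α)) && g α) = _ := key (fun t => !(xor t.1 t.2.2) && t.2.1)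
  have e9 : weight (fun α => xor (f α) (h α)) = _ := key (fun t => xor t.1 t.2.2)
  have e10 : weight (fun α => h α && xor (f α) (g α)) = _ := key (fun t => t.2.2 && xor t.1 t.2.1)
  have e11 : weight (fun α => !h α) = _ := key (fun t => !t.2.2)
  have e12 : weight (fun α => !h α && xor (f α) (g α)) = _ := key (fun t => !t.2.2 && xor t.1 t.2.1)
  have e13 := key (fun t => t.2.2)
  have etot : (Finset.univ : Finset (V → Bool)).card = ∑ t : Bool × Bool × Bool, M t := by
    have := key (fun _ => true)
    simpa [weight] using this
  simp only [Fintype.sum_prod_type, Fintype.sum_bool] at e1 e2 e3 e4 e5 e6 e7 e8 e9 e10 e11 e12 e13 etot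
  norm_num at e1 e2 e3 e4 e5 e6 e7 e8 e9 e10 e11 e12 e13 etot
  set m7 := M (true, true, true) with hm7
  set m6 := M (true, true, false) with hm6
  set m5 := M (true, false, true) with hm5
  set m4 := M (true, false, false) with hm4
  set m3 := M (false, true, true) with hm3
  set m2 := M (false, true, false) with hm2
  set m1 := M (false, false, true) with hm1
  set m0 := M (false, false, false) with hm0
  simp only [Balanced, StatIndep] at hf hg hfg ⊢
  simp only [e1, e2, e3, e4, e5, e6, e7, e8, e9, e10, e11, e12, e13] at hf hg hfg ⊢
  clear_value M m7 m6 m5 m4 m3 m2 m1 m0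
  clear hm7 hm6 hm5 hm4 hm3 hm2 hm1 hm0 hM key e1 e2 e3 e4 e5 e6 e7 e8 e9 e10 e11 e12 e13
  clear M f g h
  rcases Nat.eq_zero_or_pos (Fintype.card V) with hc | hc
  · rw [hc] at hf hg etot
    norm_num at hf hg etot
    have z5 : m5 = 0 := by omega
    have z4 : m4 = 0 := by omega
    have z3 : m3 = 0 := by omega
    have z2 : m2 = 0 := by omega
    have z1 : m1 = 0 := by omega
    have z0 : m0 = 0 := by omega
    rw [z5, z4, z3, z2, z1, z0]
    simp [Nat.mul_comm]
  · obtain ⟨k, hk⟩ : ∃ k, Fintype.card V = k + 1 := ⟨_, (Nat.succ_pred_eq_of_pos hc).symm⟩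
    have hsub : Fintype.card V - 1 = k := by omega
    rw [hsub] at hf hg
    rw [hk, pow_succ] at etot
    have hP : 0 < 2 ^ k := Nat.pow_pos (by norm_num)
    have hq : m7 + m6 = m3 + m2 := by
      have hB : m3 + m2 + (m1 + m0) = 2 ^ k := by omega
      rw [hB, hf] at hfg
      exact Nat.eq_of_mul_eq_mul_right hP hfg
    rw [statIndep_aux (m6 + m3) (m7 + m2) (m6 + m4 + (m3 + m1)) (m7 + m5 + (m2 + m0)) (2 ^ k) hP
          (by omega) (by omega),
        statIndep_aux (m5 + m3) (m4 + m2) (m7 + m5 + (m3 + m1)) (m6 + m4 + (m2 + m0)) (2 ^ k) hP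
          (by omega) (by omega)]
    omega

end Danira
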